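/- Let g = [[a,b],[c,d]] ∈ SL(2m,ℝ) (written in m×m blocks) satisfy aᵀc + cᵀa = 0, bᵀd + dᵀb = 0 and aᵀd + cᵀb = I_m (that is, gᵀΥg = Υ with Υ = [[0,I_m],[I_m,0]]). Then for every x ∈ M_m(ℝ) such that cx+d and −cxᵀ+d are invertible, writing g·x = (ax+b)(cx+d)⁻¹, one has det(g·x + (g·x)ᵀ) · det(cx+d) · det(d − cxᵀ) = det(x + xᵀ). -/

import Mathlib

open Matrix

/-- For `g = [[a,b],[c,d]] ∈ SL(2m,ℝ)` with `gᵀΥg = Υ` (`Υ = [[0,I],[I,0]]`):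
`det(g·x + (g·x)ᵀ) · det(cx+d) · det(d − cxᵀ) = det(x + xᵀ)`, the matrix instance of
`Δ((g·x)₀) = A(g,x) Δ(x₀)`. -/
theorem det_symmetric_part_conformal {m : ℕ}
    (a b c d : Matrix (Fin m) (Fin m) ℝ)
    (hg : (Matrix.fromBlocks a b c d).det = 1)
    (h1 : aᵀ * c + cᵀ * a = 0) (h2 : bᵀ * d + dᵀ * b = 0)
    (h3 : aᵀ * d + cᵀ * b = 1) :
    ∀ x : Matrix (Fin m) (Fin m) ℝ,
      IsUnit (c * x + d).det → IsUnit (d - c * xᵀ).det →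
      ((a * x + b) * (c * x + d)⁻¹ + ((a * x + b) * (c * x + d)⁻¹)ᵀ).det
          * (c * x + d).det * (d - c * xᵀ).det
        = (x + xᵀ).det := by
  intro x hR hS
  set P : Matrix (Fin m) (Fin m) ℝ := a * x + b with hP
  set R : Matrix (Fin m) (Fin m) ℝ := c * x + d with hRdef
  set S : Matrix (Fin m) (Fin m) ℝ := d - c * xᵀ with hSdef
  set Q : Matrix (Fin m) (Fin m) ℝ := b - a * xᵀ with hQdef
  set y : Matrix (Fin m) (Fin m) ℝ := P * R⁻¹ with hy
  -- transpose of h3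
  have h4 : dᵀ * a + bᵀ * c = 1 := by
    have := congrArg Matrix.transpose h3
    simpa [Matrix.transpose_add, Matrix.transpose_mul, add_comm] using this
  -- key algebraic identity
  have key : Pᵀ * S = Rᵀ * (a * xᵀ - b) := by
    have expand : Pᵀ * S - Rᵀ * (a * xᵀ - b)
        = xᵀ * (aᵀ * d + cᵀ * b) - (dᵀ * a + bᵀ * c) * xᵀ
          - xᵀ * ((aᵀ * c + cᵀ * a) * xᵀ) + (bᵀ * d + dᵀ * b) := by
      rw [hP, hRdef, hSdef]
      simp only [Matrix.transpose_add, Matrix.transpose_mul]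
      noncomm_ring
    have h0 : Pᵀ * S - Rᵀ * (a * xᵀ - b) = 0 := by
      rw [expand, h1, h2, h3, h4]
      simp
    exact sub_eq_zero.mp h0
  have hRT : IsUnit (Rᵀ).det := by rwa [Matrix.det_transpose]
  -- yᵀ * S = a * xᵀ - b
  have hyS : yᵀ * S = a * xᵀ - b := by
    rw [hy, Matrix.transpose_mul, Matrix.transpose_nonsing_inv, Matrix.mul_assoc, key,
      ← Matrix.mul_assoc, Matrix.nonsing_inv_mul _ hRT, Matrix.one_mul]
  -- Q in terms of y
  have hQ : Q = P * R⁻¹ * S - (y + yᵀ) * S := by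
    have e : (y + yᵀ) * S = y * S + yᵀ * S := Matrix.add_mul _ _ _
    rw [e, hyS, ← hy, hQdef]; abel
  -- Schur complement computation
  have hSchur : P - Q * S⁻¹ * R = (y + yᵀ) * R := by
    rw [hQ, Matrix.sub_mul, Matrix.sub_mul,
      Matrix.mul_nonsing_inv_cancel_right _ _ hS,
      Matrix.mul_nonsing_inv_cancel_right _ _ hS,
      Matrix.nonsing_inv_mul_cancel_right _ _ hR]
    abel
  -- block matrix M
  have hM : Matrix.fromBlocks a b c d * Matrix.fromBlocks x (-xᵀ) 1 1
      = Matrix.fromBlocks P Q R S := by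
    rw [Matrix.fromBlocks_multiply]
    congr 1 <;> simp [hP, hQdef, hRdef, hSdef, sub_eq_add_neg] <;> abel
  haveI : Invertible S := S.invertibleOfIsUnitDet hS
  have hdetM : (Matrix.fromBlocks P Q R S).det = S.det * ((y + yᵀ) * R).det := by
    rw [Matrix.det_fromBlocks₂₂, ← hSchur, Matrix.invOf_eq_nonsing_inv]
  have hdetT : (Matrix.fromBlocks x (-xᵀ) (1 : Matrix (Fin m) (Fin m) ℝ) 1).det
      = (x + xᵀ).det := by
    rw [Matrix.det_fromBlocks_one₂₂]
    congr 1
    simp [sub_eq_add_neg]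
  calc ((a * x + b) * (c * x + d)⁻¹ + ((a * x + b) * (c * x + d)⁻¹)ᵀ).det
        * (c * x + d).det * (d - c * xᵀ).det
      = S.det * ((y + yᵀ).det * R.det) := by ring
    _ = S.det * ((y + yᵀ) * R).det := by rw [Matrix.det_mul]
    _ = (Matrix.fromBlocks P Q R S).det := hdetM.symm
    _ = (Matrix.fromBlocks a b c d * Matrix.fromBlocks x (-xᵀ) 1 1).det := by rw [hM]
    _ = (x + xᵀ).det := by rw [Matrix.det_mul, hg, one_mul, hdetT]
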